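/- arXiv:2502.04799 — 5 statements merged into one kernel-verified Lean document; each statement's English description precedes it below -/
import Mathlib

section
/- Let $x, x^* \in \mathbb{R}^n$, $\varphi$ twice continuously differentiable with $L_H$-Lipschitz Hessian, $\nabla\varphi(x^*) = 0$, $\nabla^2\varphi(x^*) \succeq \alpha I$, and $x \in B_{\delta_0}(x^*)$ with $\delta_0 = \frac{\alpha}{2L_H}$. Let $H = \nabla^2\varphi(x)$, $\epsilon > 0$, $\tilde\eta \leq \epsilon$, and suppose $d$ satisfies $\|(H + 2\epsilon I)d + \nabla\varphi(x)\| \leq \tilde\eta\|\nabla\varphi(x)\|$. Then $\|x^* - (x+d)\| \leq \frac{2}{\alpha}\big(L_H\|x^*-x\|^2 + 2\epsilon\|x^*-x\| + 2\epsilon\|\nabla\varphi(x)\|\big)$. -/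
set_option maxHeartbeats 1000000 in
theorem stmt12 {n : ℕ} (φ : EuclideanSpace ℝ (Fin n) → ℝ) (LH α ε η : ℝ)
    (xstar x d : EuclideanSpace ℝ (Fin n))
    (hφ : ContDiff ℝ 2 φ) (hLH : 0 < LH) (hα : 0 < α)
    (hLip : ∀ u v, ‖fderiv ℝ (gradient φ) u - fderiv ℝ (gradient φ) v‖ ≤ LH * ‖u - v‖)
    (hgrad : gradient φ xstar = 0)
    (hpd : ∀ v, α * ‖v‖ ^ 2 ≤ (inner ℝ (fderiv ℝ (gradient φ) xstar v) v : ℝ))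
    (hx : ‖x - xstar‖ ≤ α / (2 * LH))
    (hε : 0 < ε) (hη : η ≤ ε)
    (hd : ‖fderiv ℝ (gradient φ) x d + (2 * ε) • d + gradient φ x‖ ≤ η * ‖gradient φ x‖) :
    ‖xstar - (x + d)‖ ≤
      2 / α * (LH * ‖xstar - x‖ ^ 2 + 2 * ε * ‖xstar - x‖ + 2 * ε * ‖gradient φ x‖) := by
  set g : EuclideanSpace ℝ (Fin n) → EuclideanSpace ℝ (Fin n) := gradient φ with hg_def
  set H : EuclideanSpace ℝ (Fin n) →L[ℝ] EuclideanSpace ℝ (Fin n) := fderiv ℝ g x with hH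
  set Hs : EuclideanSpace ℝ (Fin n) →L[ℝ] EuclideanSpace ℝ (Fin n) := fderiv ℝ g xstar with hHs
  -- gradient is C¹ hence differentiable
  have hg1 : ContDiff ℝ 1 g := by
    have h1 : ContDiff ℝ 1 (fderiv ℝ φ) := hφ.fderiv_right (by norm_num)
    have h2 : gradient φ = fun y =>
        (InnerProductSpace.toDual ℝ (EuclideanSpace ℝ (Fin n))).symm (fderiv ℝ φ y) := rfl
    rw [hg_def, h2]
    exact ((InnerProductSpace.toDual ℝ (EuclideanSpace ℝ (Fin n))).symm.toContinuousLinearEquiv.contDiff).comp h1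
  have hdiff : ∀ y : EuclideanSpace ℝ (Fin n), DifferentiableAt ℝ g y := fun y => hg1.differentiable one_ne_zero y
  -- Taylor-type bound: ‖g x + H (xstar - x)‖ ≤ LH ‖xstar - x‖²
  have hTaylor : ‖g x + H (xstar - x)‖ ≤ LH * ‖xstar - x‖ ^ 2 := by
    set s : Set (EuclideanSpace ℝ (Fin n)) := segment ℝ x xstar with hs
    have hsub : s ⊆ Metric.closedBall x ‖xstar - x‖ := by
      apply (convex_closedBall x ‖xstar - x‖).segment_subset
      · simp [Metric.mem_closedBall]
      · simp [Metric.mem_closedBall, dist_eq_norm]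
    have key : ‖(g xstar - H xstar) - (g x - H x)‖ ≤ (LH * ‖xstar - x‖) * ‖xstar - x‖ := by
      apply Convex.norm_image_sub_le_of_norm_hasFDerivWithin_le
        (f' := fun u => fderiv ℝ g u - H)
        (fun u _ => ((hdiff u).hasFDerivAt.sub H.hasFDerivAt).hasFDerivWithinAt)
        (fun u hu => ?_) (convex_segment x xstar) (left_mem_segment ℝ x xstar)
        (right_mem_segment ℝ x xstar)
      have h1 : ‖u - x‖ ≤ ‖xstar - x‖ := by
        have := hsub hu
        simpa [Metric.mem_closedBall, dist_eq_norm] using this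
      calc ‖fderiv ℝ g u - H‖ ≤ LH * ‖u - x‖ := hLip u x
        _ ≤ LH * ‖xstar - x‖ := by nlinarith
    have heq : (g xstar - H xstar) - (g x - H x) = -(g x + H (xstar - x)) := by
      rw [hgrad]
      simp [map_sub]
      abel
    rw [heq, norm_neg] at key
    calc ‖g x + H (xstar - x)‖ ≤ (LH * ‖xstar - x‖) * ‖xstar - x‖ := key
      _ = LH * ‖xstar - x‖ ^ 2 := by ring
  -- coercivity of H on ball
  set e : EuclideanSpace ℝ (Fin n) := xstar - (x + d) with he
  have hcoer : (α / 2) * ‖e‖ ^ 2 ≤ (inner ℝ (H e) e : ℝ) := by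
    have h1 : (inner ℝ (H e) e : ℝ) = inner ℝ (Hs e) e + inner ℝ ((H - Hs) e) e := by
      simp [ContinuousLinearMap.sub_apply, inner_sub_left]
    have h2 : |(inner ℝ ((H - Hs) e) e : ℝ)| ≤ ‖H - Hs‖ * ‖e‖ * ‖e‖ := by
      calc |(inner ℝ ((H - Hs) e) e : ℝ)| ≤ ‖(H - Hs) e‖ * ‖e‖ := abs_real_inner_le_norm _ _
        _ ≤ ‖H - Hs‖ * ‖e‖ * ‖e‖ := by
            have := (H - Hs).le_opNorm e
            nlinarith [norm_nonneg e]
    have h3 : ‖H - Hs‖ ≤ LH * ‖x - xstar‖ := hLip x xstar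
    have h4 : LH * ‖x - xstar‖ ≤ α / 2 := by
      have := mul_le_mul_of_nonneg_left hx hLH.le
      calc LH * ‖x - xstar‖ ≤ LH * (α / (2 * LH)) := by nlinarith
        _ = α / 2 := by field_simp
    have h5 := hpd e
    have h34 : ‖H - Hs‖ ≤ α / 2 := h3.trans h4
    have h6 : ‖H - Hs‖ * ‖e‖ * ‖e‖ ≤ (α / 2) * ‖e‖ ^ 2 := by
      have hn : (0:ℝ) ≤ ‖e‖ := norm_nonneg e
      nlinarith [mul_le_mul_of_nonneg_right (mul_le_mul_of_nonneg_right h34 hn) hn]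
    have h7 := abs_le.mp h2
    rw [h1]; linarith [h7.1, h5, h6]
  -- the vector w = (H + 2ε) e
  set w : EuclideanSpace ℝ (Fin n) := H e + (2 * ε) • e with hw
  have hcoer2 : (α / 2) * ‖e‖ ^ 2 ≤ (inner ℝ w e : ℝ) := by
    have : (inner ℝ w e : ℝ) = inner ℝ (H e) e + (2 * ε) * ‖e‖ ^ 2 := by
      rw [hw, inner_add_left, real_inner_smul_left, real_inner_self_eq_norm_sq]
    rw [this]
    nlinarith [norm_nonneg e, sq_nonneg ‖e‖, hcoer]
  -- bound ‖w‖
  set r : EuclideanSpace ℝ (Fin n) := H d + (2 * ε) • d + g x with hr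
  have hwdecomp : w = (g x + H (xstar - x)) + (2 * ε) • (xstar - x) - r := by
    rw [hw, hr, he]
    have : H (xstar - (x + d)) = H (xstar - x) - H d := by
      rw [← map_sub]; congr 1; abel
    rw [this]
    rw [show xstar - (x + d) = (xstar - x) - d by abel, smul_sub]
    abel
  have hwbound : ‖w‖ ≤ LH * ‖xstar - x‖ ^ 2 + 2 * ε * ‖xstar - x‖ + 2 * ε * ‖g x‖ := by
    rw [hwdecomp]
    have h1 : ‖(g x + H (xstar - x)) + (2 * ε) • (xstar - x) - r‖ ≤
        ‖g x + H (xstar - x)‖ + ‖(2 * ε) • (xstar - x)‖ + ‖r‖ := by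
      calc ‖(g x + H (xstar - x)) + (2 * ε) • (xstar - x) - r‖
          ≤ ‖(g x + H (xstar - x)) + (2 * ε) • (xstar - x)‖ + ‖r‖ := norm_sub_le _ _
        _ ≤ ‖g x + H (xstar - x)‖ + ‖(2 * ε) • (xstar - x)‖ + ‖r‖ := by
            have := norm_add_le (g x + H (xstar - x)) ((2 * ε) • (xstar - x))
            linarith
    have h2 : ‖(2 * ε) • (xstar - x)‖ = 2 * ε * ‖xstar - x‖ := by
      rw [norm_smul, Real.norm_eq_abs, abs_of_pos (by linarith : (0:ℝ) < 2 * ε)]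
    have h3 : ‖r‖ ≤ 2 * ε * ‖g x‖ := by
      have := hd
      have hge : (0:ℝ) ≤ ‖g x‖ := norm_nonneg _
      calc ‖r‖ ≤ η * ‖g x‖ := hd
        _ ≤ 2 * ε * ‖g x‖ := by nlinarith
    linarith [hTaylor, h1, h2.le, h2.ge, h3]
  -- conclude
  have hinner : (inner ℝ w e : ℝ) ≤ ‖w‖ * ‖e‖ := real_inner_le_norm w e
  rcases eq_or_lt_of_le (norm_nonneg e) with h0 | h0
  · rw [show ‖xstar - (x + d)‖ = ‖e‖ from rfl, ← h0]
    have hrhs : 0 ≤ LH * ‖xstar - x‖ ^ 2 + 2 * ε * ‖xstar - x‖ + 2 * ε * ‖g x‖ := by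
      positivity
    positivity
  · have key : ‖e‖ ≤ 2 / α * ‖w‖ := by
      have h1 : (α / 2) * ‖e‖ ^ 2 ≤ ‖w‖ * ‖e‖ := le_trans hcoer2 hinner
      have h2 : (α / 2) * ‖e‖ ≤ ‖w‖ := by
        nlinarith [sq_nonneg ‖e‖]
      rw [div_mul_eq_mul_div, le_div_iff₀ hα]
      linarith
    calc ‖xstar - (x + d)‖ = ‖e‖ := rfl
      _ ≤ 2 / α * ‖w‖ := key
      _ ≤ 2 / α * (LH * ‖xstar - x‖ ^ 2 + 2 * ε * ‖xstar - x‖ + 2 * ε * ‖g x‖) := by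
          apply mul_le_mul_of_nonneg_left hwbound
          positivity
end

section
/- Let $\varphi$ be twice continuously differentiable with $L_H$-Lipschitz Hessian. Let $x \in \mathbb{R}^n$, $H = \nabla^2\varphi(x)$, $M > 0$, $\mu \in (0, 1/2)$, $\beta \in (0,1)$, and let $d \in \mathbb{R}^n$ satisfy $d^\top H d = -M\|d\|^3$ and $d^\top\nabla\varphi(x) \leq 0$. If for some integer $j \geq 0$ the Armijo-type condition $\varphi(x + \beta^j d) \leq \varphi(x) - M\mu\beta^{2j}\|d\|^3$ fails, then $\beta^j > \frac{3M(1 - 2\mu)}{L_H}$. -/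
open InnerProductSpace

set_option maxHeartbeats 1000000 in
theorem stmt13 {n : ℕ} (φ : EuclideanSpace ℝ (Fin n) → ℝ) (LH M μ β : ℝ)
    (x d : EuclideanSpace ℝ (Fin n)) (j : ℕ)
    (hφ : ContDiff ℝ 2 φ) (hLH : 0 < LH) (hM : 0 < M)
    (hμ0 : 0 < μ) (hμ2 : μ < 1 / 2) (hβ0 : 0 < β) (hβ1 : β < 1)
    (hLip : ∀ u v, ‖fderiv ℝ (gradient φ) u - fderiv ℝ (gradient φ) v‖ ≤ LH * ‖u - v‖)
    (hdH : (inner ℝ (fderiv ℝ (gradient φ) x d) d : ℝ) = -M * ‖d‖ ^ 3)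
    (hdg : (inner ℝ (gradient φ x) d : ℝ) ≤ 0)
    (hfail : φ x - M * μ * β ^ (2 * j) * ‖d‖ ^ 3 < φ (x + β ^ j • d)) :
    3 * M * (1 - 2 * μ) / LH < β ^ j := by
  classical
  rcases eq_or_ne d 0 with hd0 | hd0
  · exfalso
    simp [hd0] at hfail
  have hdpos : (0 : ℝ) < ‖d‖ := norm_pos_iff.mpr hd0
  set G := gradient φ with hGdef
  have hφ1 : Differentiable ℝ φ := hφ.differentiable (by norm_num)
  have hGc : ContDiff ℝ 1 G := by
    have h1 : ContDiff ℝ 1 (fderiv ℝ φ) := hφ.fderiv_right (by norm_num)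
    exact ((InnerProductSpace.toDual ℝ (EuclideanSpace ℝ (Fin n))).symm.contDiff).comp h1
  have hGdiff : Differentiable ℝ G := hGc.differentiable (by norm_num)
  have hc : ∀ t : ℝ, HasDerivAt (fun t : ℝ => x + t • d) d t := by
    intro t
    simpa using ((hasDerivAt_id t).smul_const d).const_add x
  have hD1 : ∀ t : ℝ, HasDerivAt (fun t : ℝ => φ (x + t • d))
      (inner ℝ (G (x + t • d)) d : ℝ) t := by
    intro t
    have h1 := ((hφ1 (x + t • d)).hasFDerivAt).comp_hasDerivAt t (hc t)
    refine h1.congr_deriv ?_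
    rw [hGdef]
    exact InnerProductSpace.toDual_symm_apply.symm
  have hD2 : ∀ t : ℝ, HasDerivAt (fun t : ℝ => (inner ℝ (G (x + t • d)) d : ℝ))
      (inner ℝ (fderiv ℝ G (x + t • d) d) d : ℝ) t := by
    intro t
    have h1 : HasDerivAt (fun t : ℝ => G (x + t • d)) (fderiv ℝ G (x + t • d) d) t :=
      ((hGdiff (x + t • d)).hasFDerivAt).comp_hasDerivAt (l := G) t (hc t)
    simpa using h1.inner ℝ (hasDerivAt_const t d)
  set A : ℝ := (inner ℝ (G x) d : ℝ) with hA
  set B : ℝ := (inner ℝ (fderiv ℝ G x d) d : ℝ) with hB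
  set h : ℝ → ℝ := fun t =>
    φ (x + t • d) - φ x - t * A - t ^ 2 / 2 * B - LH * t ^ 3 / 6 * ‖d‖ ^ 3 with hh
  set p : ℝ → ℝ := fun t =>
    (inner ℝ (G (x + t • d)) d : ℝ) - A - t * B - LH * t ^ 2 / 2 * ‖d‖ ^ 3 with hp
  have hhd : ∀ t : ℝ, HasDerivAt h (p t) t := by
    intro t
    have h1 := (((((hD1 t).sub_const (φ x)).sub
        ((hasDerivAt_id t).mul_const A)).sub
        (((hasDerivAt_pow 2 t).div_const 2).mul_const B)).sub
        ((((hasDerivAt_pow 3 t).const_mul LH).div_const 6).mul_const (‖d‖ ^ 3)))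
    refine h1.congr_deriv ?_
    simp only [hp, id_eq]
    push_cast
    ring
  have hpd : ∀ t : ℝ, HasDerivAt p
      ((inner ℝ (fderiv ℝ G (x + t • d) d) d : ℝ) - B - LH * t * ‖d‖ ^ 3) t := by
    intro t
    have h1 := (((hD2 t).sub_const A).sub
        ((hasDerivAt_id t).mul_const B)).sub
        ((((hasDerivAt_pow 2 t).const_mul LH).div_const 2).mul_const (‖d‖ ^ 3))
    refine h1.congr_deriv ?_
    simp only [one_mul]
    push_cast
    ring
  have hq : ∀ t : ℝ, 0 ≤ t →
      (inner ℝ (fderiv ℝ G (x + t • d) d) d : ℝ) - B - LH * t * ‖d‖ ^ 3 ≤ 0 := by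
    intro t ht
    have h1 : (inner ℝ ((fderiv ℝ G (x + t • d) - fderiv ℝ G x) d) d : ℝ)
        ≤ ‖(fderiv ℝ G (x + t • d) - fderiv ℝ G x) d‖ * ‖d‖ :=
      real_inner_le_norm _ _
    have h2 : ‖(fderiv ℝ G (x + t • d) - fderiv ℝ G x) d‖
        ≤ ‖fderiv ℝ G (x + t • d) - fderiv ℝ G x‖ * ‖d‖ :=
      ContinuousLinearMap.le_opNorm _ _
    have h3 : ‖fderiv ℝ G (x + t • d) - fderiv ℝ G x‖ ≤ LH * ‖x + t • d - x‖ :=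
      hLip _ _
    have h4 : ‖x + t • d - x‖ = t * ‖d‖ := by
      simp [norm_smul, abs_of_nonneg ht]
    have h5 : (inner ℝ ((fderiv ℝ G (x + t • d) - fderiv ℝ G x) d) d : ℝ)
        = (inner ℝ (fderiv ℝ G (x + t • d) d) d : ℝ) - B := by
      simp [hB, inner_sub_left]
    rw [h4] at h3
    have h6 : ‖fderiv ℝ G (x + t • d) - fderiv ℝ G x‖ * ‖d‖ ≤ LH * (t * ‖d‖) * ‖d‖ :=
      mul_le_mul_of_nonneg_right h3 (norm_nonneg d)
    have h7 : ‖(fderiv ℝ G (x + t • d) - fderiv ℝ G x) d‖ * ‖d‖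
        ≤ LH * (t * ‖d‖) * ‖d‖ * ‖d‖ := by
      nlinarith [norm_nonneg ((fderiv ℝ G (x + t • d) - fderiv ℝ G x) d), norm_nonneg d]
    rw [h5] at h1
    nlinarith [norm_nonneg d]
  have hpanti : AntitoneOn p (Set.Ici 0) := by
    apply antitoneOn_of_deriv_nonpos (convex_Ici 0)
    · exact fun t _ => (hpd t).continuousAt.continuousWithinAt
    · exact fun t ht => ((hpd t).differentiableAt).differentiableWithinAt
    · intro t ht
      rw [interior_Ici] at ht
      rw [(hpd t).deriv]
      exact hq t (le_of_lt ht)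
  have hp0 : p 0 = 0 := by simp [hp, hA]
  have hple : ∀ t : ℝ, 0 ≤ t → p t ≤ 0 := by
    intro t ht
    calc p t ≤ p 0 := hpanti (by simp) ht ht
    _ = 0 := hp0
  have hhanti : AntitoneOn h (Set.Ici 0) := by
    apply antitoneOn_of_deriv_nonpos (convex_Ici 0)
    · exact fun t _ => (hhd t).continuousAt.continuousWithinAt
    · exact fun t ht => ((hhd t).differentiableAt).differentiableWithinAt
    · intro t ht
      rw [interior_Ici] at ht
      rw [(hhd t).deriv]
      exact hple t (le_of_lt ht)
  have h0 : h 0 = 0 := by simp [hh]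
  set T : ℝ := β ^ j with hT
  have hTpos : 0 < T := pow_pos hβ0 j
  have hhT : h T ≤ 0 := by
    calc h T ≤ h 0 := hhanti (by simp) (Set.mem_Ici.mpr hTpos.le) hTpos.le
    _ = 0 := h0
  have hup : φ (x + T • d) ≤ φ x + T * A + T ^ 2 / 2 * B + LH * T ^ 3 / 6 * ‖d‖ ^ 3 := by
    simp only [hh] at hhT
    linarith
  have hB' : B = -M * ‖d‖ ^ 3 := hdH
  have hT2 : β ^ (2 * j) = T ^ 2 := by
    rw [hT, ← pow_mul, mul_comm]
  rw [hT2] at hfail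
  rw [div_lt_iff₀ hLH]
  have hAle : T * A ≤ 0 := mul_nonpos_of_nonneg_of_nonpos hTpos.le hdg
  have hT2d : 0 < T ^ 2 * ‖d‖ ^ 3 := by positivity
  nlinarith [mul_pos hTpos hT2d]
end

section
/- Let $\varphi$ be twice continuously differentiable with $L_H$-Lipschitz Hessian, $x \in \mathbb{R}^n$, $H = \nabla^2\varphi(x)$, $M, \omega > 0$, $\mu \in (0, 1/2)$, $\beta \in (0,1)$, $\tau \in (0,1]$, and suppose $d \in \mathbb{R}^n$ satisfies $d^\top H d \geq -\sqrt{M}\omega\|d\|^2$ and $d^\top\nabla\varphi(x) = -d^\top(H + 2\sqrt{M}\omega I)d$. If for some integer $j \geq 0$ we have $\varphi(x + \tau\beta^j d) - \varphi(x) > \mu\tau\beta^j d^\top\nabla\varphi(x)$, then $\beta^j > \sqrt{\frac{6(1-\mu)\sqrt{M}\omega}{L_H\tau^2\|d\|}}$. -/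
open Set

private lemma mono_aux {F F' : ℝ → ℝ} (hF : ∀ u, HasDerivAt F (F' u) u)
    (h0 : ∀ u ∈ Set.Ioo (0:ℝ) 1, 0 ≤ F' u) : ∀ u ∈ Set.Icc (0:ℝ) 1, F 0 ≤ F u := by
  have hmono : MonotoneOn F (Set.Icc 0 1) := by
    apply monotoneOn_of_deriv_nonneg (convex_Icc 0 1)
    · exact fun u _ => (hF u).continuousAt.continuousWithinAt
    · exact fun u _ => (hF u).differentiableAt.differentiableWithinAt
    · intro u hu
      rw [interior_Icc] at hu
      rw [(hF u).deriv]
      exact h0 u hu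
  exact fun u hu => hmono (Set.left_mem_Icc.mpr zero_le_one) hu hu.1

private lemma taylor_cubic {f g h : ℝ → ℝ} {C : ℝ}
    (hf : ∀ u, HasDerivAt f (g u) u) (hg : ∀ u, HasDerivAt g (h u) u)
    (hC : ∀ u ∈ Set.Ioo (0:ℝ) 1, |h u - h 0| ≤ C * u) :
    f 1 ≤ f 0 + g 0 + h 0 / 2 + C / 6 := by
  have stepA : ∀ u ∈ Set.Icc (0:ℝ) 1, g u - g 0 - u * h 0 ≤ C * u ^ 2 / 2 := by
    have key := mono_aux (F := fun u => C * u ^ 2 / 2 - (g u - g 0 - u * h 0))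
      (F' := fun u => C * u - (h u - h 0))
      (fun u => by
        have h1 : HasDerivAt (fun u : ℝ => C * u ^ 2 / 2) (C * u) u := by
          have := ((hasDerivAt_pow 2 u).const_mul C).div_const 2
          refine this.congr_deriv ?_
          ring
        have h2 : HasDerivAt (fun u : ℝ => g u - g 0 - u * h 0) (h u - h 0) u := by
          have := (((hg u).sub_const (g 0)).sub ((hasDerivAt_id u).mul_const (h 0)))
          refine this.congr_deriv ?_
          ring
        exact h1.sub h2)
      (fun u hu => by
        have := hC u hu
        have h2 : h u - h 0 ≤ C * u := (abs_le.mp this).2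
        linarith)
    intro u hu
    have := key u hu
    nlinarith [this]
  have stepB := mono_aux
    (F := fun u => C * u ^ 3 / 6 - (f u - f 0 - u * g 0 - u ^ 2 / 2 * h 0))
    (F' := fun u => C * u ^ 2 / 2 - (g u - g 0 - u * h 0))
    (fun u => by
      have h1 : HasDerivAt (fun u : ℝ => C * u ^ 3 / 6) (C * u ^ 2 / 2) u := by
        have := ((hasDerivAt_pow 3 u).const_mul C).div_const 6
        refine this.congr_deriv ?_
        ring
      have h2 : HasDerivAt (fun u : ℝ => f u - f 0 - u * g 0 - u ^ 2 / 2 * h 0)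
          (g u - g 0 - u * h 0) u := by
        have := ((((hf u).sub_const (f 0)).sub ((hasDerivAt_id u).mul_const (g 0))).sub
          (((hasDerivAt_pow 2 u).div_const 2).mul_const (h 0)))
        refine this.congr_deriv ?_
        ring
      exact h1.sub h2)
    (fun u hu => by
      have := stepA u (Set.mem_Icc_of_Ioo hu)
      linarith)
  have := stepB 1 (Set.right_mem_Icc.mpr zero_le_one)
  nlinarith [this]


set_option maxHeartbeats 2000000 in
private lemma final_arith (LH M ω μ β τ G Q D : ℝ) (j : ℕ)
    (hLH : 0 < LH) (hM : 0 < M) (hω : 0 < ω) (hμ2 : μ < 1 / 2)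
    (hβ0 : 0 < β) (hβ1 : β < 1) (hτ0 : 0 < τ) (hτ1 : τ ≤ 1) (hD : 0 < D)
    (hdH : -(Real.sqrt M * ω) * D ^ 2 ≤ Q)
    (hdg : G = -(Q + 2 * Real.sqrt M * ω * D ^ 2))
    (hsum : μ * (τ * β ^ j) * G <
      (τ * β ^ j) * G + (τ * β ^ j) ^ 2 * Q / 2 + LH * (τ * β ^ j) ^ 3 * D ^ 3 / 6) :
    Real.sqrt (6 * (1 - μ) * Real.sqrt M * ω / (LH * τ ^ 2 * D)) < β ^ j := by
  have hbj : 0 < β ^ j := pow_pos hβ0 j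
  have hbj1 : β ^ j ≤ 1 := pow_le_one₀ hβ0.le hβ1.le
  set t := τ * β ^ j with ht_def
  have ht0 : 0 < t := mul_pos hτ0 hbj
  have ht1 : t ≤ 1 := by nlinarith
  set a : ℝ := Real.sqrt M * ω with ha_def
  have hsM : 0 < Real.sqrt M := Real.sqrt_pos.mpr hM
  have ha : 0 < a := mul_pos hsM hω
  have e0 : 0 < t * ((1 - μ) * G + t * Q / 2 + LH * t ^ 2 * D ^ 3 / 6) := by nlinarith [hsum]
  have e1 : 0 < (1 - μ) * G + t * Q / 2 + LH * t ^ 2 * D ^ 3 / 6 := by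
    by_contra hcon
    push_neg at hcon
    nlinarith [mul_nonpos_of_nonneg_of_nonpos ht0.le hcon]
  have hdg' : G = -(Q + 2 * a * D ^ 2) := by rw [hdg, ha_def]; ring
  have hdH' : -a * D ^ 2 ≤ Q := hdH
  have hcoef : 0 ≤ (1 - μ) - t / 2 := by linarith
  have e2 : 0 < -((1 - μ) * (Q + 2 * a * D ^ 2)) + t * Q / 2 + LH * t ^ 2 * D ^ 3 / 6 := by
    rw [hdg'] at e1
    nlinarith [e1]
  have hprod : 0 ≤ ((1 - μ) - t / 2) * (Q + a * D ^ 2) := mul_nonneg hcoef (by linarith)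
  have hpos : 0 < t * (a * D ^ 2) := mul_pos ht0 (mul_pos ha (pow_pos hD 2))
  have key : (1 - μ) * a * D ^ 2 < LH * t ^ 2 * D ^ 3 / 6 := by
    nlinarith [e2, hprod, hpos]
  rw [Real.sqrt_lt' hbj]
  rw [div_lt_iff₀ (by positivity)]
  have ht2 : t ^ 2 = τ ^ 2 * (β ^ j) ^ 2 := by rw [ht_def]; ring
  rw [ht2] at key
  nlinarith [mul_pos hD hD, key, ha_def]

set_option maxHeartbeats 1000000 in
theorem stmt14 {n : ℕ} (φ : EuclideanSpace ℝ (Fin n) → ℝ) (LH M ω μ β τ : ℝ)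
    (x d : EuclideanSpace ℝ (Fin n)) (j : ℕ)
    (hφ : ContDiff ℝ 2 φ) (hLH : 0 < LH) (hM : 0 < M) (hω : 0 < ω)
    (hμ0 : 0 < μ) (hμ2 : μ < 1 / 2) (hβ0 : 0 < β) (hβ1 : β < 1)
    (hτ0 : 0 < τ) (hτ1 : τ ≤ 1)
    (hLip : ∀ u v, ‖fderiv ℝ (gradient φ) u - fderiv ℝ (gradient φ) v‖ ≤ LH * ‖u - v‖)
    (hdH : -(Real.sqrt M * ω) * ‖d‖ ^ 2 ≤ (inner ℝ (fderiv ℝ (gradient φ) x d) d : ℝ))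
    (hdg : (inner ℝ (gradient φ x) d : ℝ) =
      -((inner ℝ (fderiv ℝ (gradient φ) x d) d : ℝ) + 2 * Real.sqrt M * ω * ‖d‖ ^ 2))
    (hfail : φ x + μ * τ * β ^ j * (inner ℝ (gradient φ x) d : ℝ) < φ (x + (τ * β ^ j) • d)) :
    Real.sqrt (6 * (1 - μ) * Real.sqrt M * ω / (LH * τ ^ 2 * ‖d‖)) < β ^ j := by
  set t := τ * β ^ j with ht_def
  have hbj : 0 < β ^ j := pow_pos hβ0 j
  have hbj1 : β ^ j ≤ 1 := pow_le_one₀ hβ0.le hβ1.le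
  have ht0 : 0 < t := mul_pos hτ0 hbj
  have ht1 : t ≤ 1 := by nlinarith
  -- d ≠ 0
  have hd0 : d ≠ 0 := by
    intro hd
    rw [hd] at hfail
    simp at hfail
  have hD : (0:ℝ) < ‖d‖ := norm_pos_iff.mpr hd0
  set s : EuclideanSpace ℝ (Fin n) := t • d with hs_def
  set γ : ℝ → EuclideanSpace ℝ (Fin n) := fun u => x + u • s with hγ_def
  have hγ : ∀ u : ℝ, HasDerivAt γ s u := by
    intro u
    have : HasDerivAt (fun u : ℝ => u • s) s u := by
      simpa using (hasDerivAt_id u).smul_const s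
    exact this.const_add x
  have hγ0 : γ 0 = x := by simp [hγ_def]
  have hφd : Differentiable ℝ φ := hφ.differentiable (by norm_num)
  have hgrad1 : ContDiff ℝ 1 (gradient φ) := by
    have h1 : ContDiff ℝ 1 (fderiv ℝ φ) := hφ.fderiv_right (by norm_num)
    exact ((InnerProductSpace.toDual ℝ (EuclideanSpace ℝ (Fin n))).symm.contDiff).comp h1
  have hgdiff : Differentiable ℝ (gradient φ) := hgrad1.differentiable one_ne_zero
  set f : ℝ → ℝ := fun u => φ (γ u) with hf_def
  set g : ℝ → ℝ := fun u => (inner ℝ s (gradient φ (γ u)) : ℝ) with hg_def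
  set h : ℝ → ℝ := fun u => (inner ℝ s (fderiv ℝ (gradient φ) (γ u) s) : ℝ) with hh_def
  have hf : ∀ u, HasDerivAt f (g u) u := by
    intro u
    have hφat : HasFDerivAt φ ((InnerProductSpace.toDual ℝ (EuclideanSpace ℝ (Fin n))) (gradient φ (γ u))) (γ u) :=
      ((hφd (γ u)).hasGradientAt).hasFDerivAt
    have h2 := hφat.comp_hasDerivAt u (hγ u)
    have he : ((InnerProductSpace.toDual ℝ (EuclideanSpace ℝ (Fin n))) (gradient φ (γ u))) s
        = g u := by
      rw [InnerProductSpace.toDual_apply_apply]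
      exact real_inner_comm _ _
    rw [he] at h2
    exact h2
  have hg' : ∀ u, HasDerivAt g (h u) u := by
    intro u
    have h1 : HasDerivAt (fun u => gradient φ (γ u)) (fderiv ℝ (gradient φ) (γ u) s) u :=
      (hgdiff (γ u)).hasFDerivAt.comp_hasDerivAt u (hγ u)
    have h2 := (innerSL ℝ s).hasFDerivAt.comp_hasDerivAt u h1
    have he : (innerSL ℝ s) (fderiv ℝ (gradient φ) (γ u) s) = h u := innerSL_apply_apply ℝ s _
    rw [he] at h2
    exact h2
  set C : ℝ := LH * ‖s‖ ^ 3 with hC_def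
  have hC : ∀ u ∈ Set.Ioo (0:ℝ) 1, |h u - h 0| ≤ C * u := by
    intro u hu
    have hu0 : 0 ≤ u := hu.1.le
    have heq : h u - h 0 =
        (inner ℝ s ((fderiv ℝ (gradient φ) (γ u) - fderiv ℝ (gradient φ) (γ 0)) s) : ℝ) := by
      simp [hh_def, ContinuousLinearMap.sub_apply, inner_sub_right]
    rw [heq]
    have hdiff : γ u - γ 0 = u • s := by simp [hγ_def]
    have hnorm : ‖γ u - γ 0‖ = u * ‖s‖ := by
      rw [hdiff, norm_smul, Real.norm_eq_abs, abs_of_nonneg hu0]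
    have hb1 : ‖(fderiv ℝ (gradient φ) (γ u) - fderiv ℝ (gradient φ) (γ 0)) s‖ ≤
        ‖fderiv ℝ (gradient φ) (γ u) - fderiv ℝ (gradient φ) (γ 0)‖ * ‖s‖ :=
      ContinuousLinearMap.le_opNorm _ _
    have hb2 : ‖fderiv ℝ (gradient φ) (γ u) - fderiv ℝ (gradient φ) (γ 0)‖ ≤
        LH * (u * ‖s‖) := hnorm ▸ hLip (γ u) (γ 0)
    calc |(inner ℝ s ((fderiv ℝ (gradient φ) (γ u) - fderiv ℝ (gradient φ) (γ 0)) s) : ℝ)|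
        ≤ ‖s‖ * ‖(fderiv ℝ (gradient φ) (γ u) - fderiv ℝ (gradient φ) (γ 0)) s‖ :=
          abs_real_inner_le_norm _ _
      _ ≤ ‖s‖ * (‖fderiv ℝ (gradient φ) (γ u) - fderiv ℝ (gradient φ) (γ 0)‖ * ‖s‖) :=
          mul_le_mul_of_nonneg_left hb1 (norm_nonneg s)
      _ ≤ ‖s‖ * ((LH * (u * ‖s‖)) * ‖s‖) :=
          mul_le_mul_of_nonneg_left
            (mul_le_mul_of_nonneg_right hb2 (norm_nonneg s)) (norm_nonneg s)
      _ = C * u := by rw [hC_def]; ring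
  have htay := taylor_cubic hf hg' hC
  -- unfold values
  have hf1 : f 1 = φ (x + s) := by simp [hf_def, hγ_def]
  have hf0 : f 0 = φ x := by simp [hf_def, hγ_def]
  set G : ℝ := (inner ℝ (gradient φ x) d : ℝ) with hG_def
  set Q : ℝ := (inner ℝ (fderiv ℝ (gradient φ) x d) d : ℝ) with hQ_def
  have hg0 : g 0 = t * G := by
    show (inner ℝ s (gradient φ (γ 0)) : ℝ) = t * G
    rw [hγ0, hs_def, real_inner_smul_left]
    have hG' : G = (inner ℝ d (gradient φ x) : ℝ) := by
      rw [hG_def]; exact real_inner_comm _ _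
    rw [hG']
  have hh0 : h 0 = t ^ 2 * Q := by
    show (inner ℝ s (fderiv ℝ (gradient φ) (γ 0) s) : ℝ) = t ^ 2 * Q
    rw [hγ0, hs_def, map_smul, real_inner_smul_left, real_inner_smul_right]
    have hQ' : Q = (inner ℝ d (fderiv ℝ (gradient φ) x d) : ℝ) := by
      rw [hQ_def]; exact real_inner_comm _ _
    rw [hQ']
    ring
  have hns : ‖s‖ = t * ‖d‖ := by
    rw [hs_def, norm_smul, Real.norm_eq_abs, abs_of_pos ht0]
  have hCval : C = LH * t ^ 3 * ‖d‖ ^ 3 := by rw [hC_def, hns]; ring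
  rw [hf1, hf0, hg0, hh0, hCval] at htay
  have hfail' : φ x + μ * t * G < φ (x + s) := by
    rw [ht_def]
    have h1 : μ * (τ * β ^ j) * G = μ * τ * β ^ j * G := by ring
    rw [h1]
    simpa [hs_def, ht_def] using hfail
  have hsum : μ * (τ * β ^ j) * G <
      (τ * β ^ j) * G + (τ * β ^ j) ^ 2 * Q / 2 + LH * (τ * β ^ j) ^ 3 * ‖d‖ ^ 3 / 6 := by
    rw [← ht_def]
    linarith [htay, hfail']
  exact final_arith LH M ω μ β τ G Q ‖d‖ j hLH hM hω hμ2 hβ0 hβ1 hτ0 hτ1 hD hdH hdg hsum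
end

section
/- Let $\mathcal{J}^{-1}, \mathcal{J}^0, \mathcal{J}^1$ partition $I_{0,k} = \{0,\dots,k-1\}$ with $|\mathcal{J}^1 \cap I_{0,k}| \leq |\mathcal{J}^{-1} \cap I_{0,k}| + \Gamma$ and hence $k \leq 2|\mathcal{J}^{-1}\cap I_{0,k}| + |\mathcal{J}^0\cap I_{0,k}| + \Gamma$, where $\Gamma \geq 0$. Let $S_k \subseteq I_{0,k}$, $U_k \geq 0$, $J_k - 1 = |S_k|$, $W_k \in \mathbb{R}$, and define $\Sigma_k = |I_{0,k}\cap\mathcal{J}^{-1}| + \max(|S_k\cap\mathcal{J}^0|, |I_{0,k}\cap\mathcal{J}^0| - W_k - U_k J_k)$. Then at least one of the following holds: $\Sigma_k \geq \frac{k}{5(U_k+2)} - \Gamma - 2$, or $W_k \geq \frac{k}{3(U_k+2)}$. -/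
theorem stmt16 (k : ℕ) (Jm J0 J1 S : Finset ℕ) (Γ U W : ℝ)
    (hΓ : 0 ≤ Γ) (hU : 0 ≤ U)
    (hd1 : Disjoint Jm J0) (hd2 : Disjoint Jm J1) (hd3 : Disjoint J0 J1)
    (hunion : Jm ∪ J0 ∪ J1 = Finset.range k)
    (hcard : (J1.card : ℝ) ≤ (Jm.card : ℝ) + Γ)
    (hS : S ⊆ Finset.range k) :
    (k : ℝ) / (5 * (U + 2)) - Γ - 2 ≤
      (Jm.card : ℝ) +
        max (((S ∩ J0).card : ℝ)) ((J0.card : ℝ) - W - U * ((S.card : ℝ) + 1)) ∨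
    (k : ℝ) / (3 * (U + 2)) ≤ W := by
  by_contra hcon
  push_neg at hcon
  obtain ⟨hA, hB⟩ := hcon
  set M := max (((S ∩ J0).card : ℝ)) ((J0.card : ℝ) - W - U * ((S.card : ℝ) + 1)) with hMdef
  have hM1 : ((S ∩ J0).card : ℝ) ≤ M := le_max_left _ _
  have hM2 : (J0.card : ℝ) - W - U * ((S.card : ℝ) + 1) ≤ M := le_max_right _ _
  have hM0 : (0 : ℝ) ≤ M := le_trans (by positivity) hM1
  have hd12 : Disjoint (Jm ∪ J0) J1 := Finset.disjoint_union_left.mpr ⟨hd2, hd3⟩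
  have hk : k = Jm.card + J0.card + J1.card := by
    rw [← Finset.card_range k, ← hunion, Finset.card_union_of_disjoint hd12,
      Finset.card_union_of_disjoint hd1]
  have hsplit : S.card ≤ Jm.card + (S ∩ J0).card + J1.card := by
    have h1 : S = S ∩ (Jm ∪ J0) ∪ S ∩ J1 := by
      rw [← Finset.inter_union_distrib_left, hunion, Finset.inter_eq_left.mpr hS]
    calc S.card = (S ∩ (Jm ∪ J0) ∪ S ∩ J1).card := by rw [← h1]
      _ ≤ (S ∩ (Jm ∪ J0)).card + (S ∩ J1).card := Finset.card_union_le _ _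
      _ = (S ∩ Jm ∪ S ∩ J0).card + (S ∩ J1).card := by
          rw [Finset.inter_union_distrib_left]
      _ ≤ ((S ∩ Jm).card + (S ∩ J0).card) + (S ∩ J1).card :=
          Nat.add_le_add_right (Finset.card_union_le _ _) _
      _ ≤ (Jm.card + (S ∩ J0).card) + J1.card := by
          gcongr <;> exact Finset.inter_subset_right
  have hkR : (k : ℝ) = (Jm.card : ℝ) + (J0.card : ℝ) + (J1.card : ℝ) := by
    exact_mod_cast hk
  have hsR : (S.card : ℝ) ≤ (Jm.card : ℝ) + ((S ∩ J0).card : ℝ) + (J1.card : ℝ) := by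
    exact_mod_cast hsplit
  have hD : (0 : ℝ) < U + 2 := by linarith
  have h5D : (0 : ℝ) < 5 * (U + 2) := by linarith
  have h3D : (0 : ℝ) < 3 * (U + 2) := by linarith
  have hm0 : (0 : ℝ) ≤ (Jm.card : ℝ) := by positivity
  have hk0 : (0 : ℝ) ≤ (k : ℝ) := by positivity
  have hs0 : (0 : ℝ) ≤ (S.card : ℝ) := by positivity
  -- clear denominators
  have hA' : ((Jm.card : ℝ) + M + Γ + 2) * (5 * (U + 2)) < k := by
    have h := (lt_div_iff₀ h5D).mp (show (Jm.card : ℝ) + M + Γ + 2 < k / (5 * (U + 2)) by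
      linarith)
    linarith
  have hB' : W * (3 * (U + 2)) < k := by
    have h := (lt_div_iff₀ h3D).mp (show W < k / (3 * (U + 2)) by linarith)
    linarith
  set X : ℝ := (Jm.card : ℝ) + M with hXdef
  have hX0 : (0 : ℝ) ≤ X := by positivity
  -- s + 1 ≤ 2X + Γ + 1
  have hstep2 : (S.card : ℝ) + 1 ≤ 2 * X + Γ + 1 := by
    have : ((S ∩ J0).card : ℝ) ≤ M := hM1
    linarith
  -- U(s+1) ≤ (U+2)(2X+Γ+1)
  have hstep3 : U * ((S.card : ℝ) + 1) ≤ (U + 2) * (2 * X + Γ + 1) := by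
    have h1 : U * ((S.card : ℝ) + 1) ≤ (U + 2) * ((S.card : ℝ) + 1) := by nlinarith
    have h2 : (U + 2) * ((S.card : ℝ) + 1) ≤ (U + 2) * (2 * X + Γ + 1) :=
      mul_le_mul_of_nonneg_left hstep2 (le_of_lt hD)
    linarith
  -- key inequality: k ≤ 2X + Γ + W + (U+2)(2X+Γ+1)
  have hkey : (k : ℝ) ≤ 2 * X + Γ + W + (U + 2) * (2 * X + Γ + 1) := by
    have hz : (J0.card : ℝ) ≤ M + W + U * ((S.card : ℝ) + 1) := by linarith
    have hp : (J1.card : ℝ) ≤ (Jm.card : ℝ) + Γ := hcard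
    nlinarith [hkR, hz, hp, hstep3, hm0, hM0]
  -- derive contradiction
  have hkey3 : 3 * (U + 2) * (k : ℝ) ≤
      3 * (U + 2) * (2 * X + Γ + W + (U + 2) * (2 * X + Γ + 1)) :=
    mul_le_mul_of_nonneg_left hkey (by linarith)
  have hA'' : (U + 2) * ((X + Γ + 2) * (5 * (U + 2))) < (U + 2) * k :=
    mul_lt_mul_of_pos_left hA' hD
  have p1 : 0 ≤ U * k := mul_nonneg hU hk0
  have p2 : 0 ≤ U * Γ := mul_nonneg hU hΓ
  have p3 : 0 ≤ U * (U * Γ) := mul_nonneg hU p2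
  have p4 : 0 ≤ U * U := mul_nonneg hU hU
  linarith [hkey3, hA', hA'', hB', p1, p2, p3, p4, hk0, hΓ, hU]
end

section
/- Let $\varphi$ be twice continuously differentiable with $L_H$-Lipschitz Hessian on a ball, let $x^*$ satisfy $\nabla\varphi(x^*) = 0$ and $\nabla^2\varphi(x^*) \succeq \alpha I$, $\delta_0 = \frac{\alpha}{2L_H}$, $L_g = \|\nabla^2\varphi(x^*)\| + L_H\delta_0$. Suppose $x \in B_{\delta_0}(x^*)$ and the step $d$ satisfies $\|x^* - (x+d)\| \leq \frac{2}{\alpha}(L_H\|x^*-x\|^2 + 2\epsilon\|x^*-x\| + 2\epsilon\|\nabla\varphi(x)\|)$ with $x + d \in B_{\delta_0}(x^*)$. Then $\|\nabla\varphi(x+d)\| \leq \frac{8L_gL_H}{\alpha^3}\|\nabla\varphi(x)\|^2 + \frac{4L_g(2+\alpha)}{\alpha^2}\epsilon\|\nabla\varphi(x)\|$. -/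
set_option maxHeartbeats 1000000

open InnerProductSpace Metric

theorem stmt18 {n : ℕ} (φ : EuclideanSpace ℝ (Fin n) → ℝ) (LH α ε : ℝ)
    (xstar x d : EuclideanSpace ℝ (Fin n))
    (hφ : ContDiff ℝ 2 φ) (hLH : 0 < LH) (hα : 0 < α) (hε : 0 < ε)
    (hLip : ∀ u v, ‖fderiv ℝ (gradient φ) u - fderiv ℝ (gradient φ) v‖ ≤ LH * ‖u - v‖)
    (hgrad : gradient φ xstar = 0)
    (hpd : ∀ v, α * ‖v‖ ^ 2 ≤ (inner ℝ (fderiv ℝ (gradient φ) xstar v) v : ℝ))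
    (hx : ‖x - xstar‖ ≤ α / (2 * LH))
    (hxd : ‖x + d - xstar‖ ≤ α / (2 * LH))
    (hdist : ‖xstar - (x + d)‖ ≤
      2 / α * (LH * ‖xstar - x‖ ^ 2 + 2 * ε * ‖xstar - x‖ + 2 * ε * ‖gradient φ x‖)) :
    ‖gradient φ (x + d)‖ ≤
      8 * (‖fderiv ℝ (gradient φ) xstar‖ + LH * (α / (2 * LH))) * LH / α ^ 3 *
          ‖gradient φ x‖ ^ 2 +
        4 * (‖fderiv ℝ (gradient φ) xstar‖ + LH * (α / (2 * LH))) * (2 + α) / α ^ 2 *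
          ε * ‖gradient φ x‖ := by
  set δ0 := α / (2 * LH) with hδ0
  set H := fderiv ℝ (gradient φ) xstar with hH
  set Lg := ‖H‖ + LH * δ0 with hLg
  have hδ0pos : 0 < δ0 := by positivity
  have hLHδ0 : LH * δ0 = α / 2 := by field_simp [hδ0]; rw [hδ0]; field_simp
  -- differentiability of gradient
  have hdiff : Differentiable ℝ (gradient φ) := by
    have h1 : ContDiff ℝ 1 (fderiv ℝ φ) := hφ.fderiv_right (le_refl 2)
    have : gradient φ = fun y => (toDual ℝ (EuclideanSpace ℝ (Fin n))).symm (fderiv ℝ φ y) := rfl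
    rw [this]
    exact ((toDual ℝ (EuclideanSpace ℝ (Fin n))).symm.toContinuousLinearEquiv.differentiable).comp
      (h1.differentiable one_ne_zero)
  have hconv : Convex ℝ (closedBall xstar δ0) := convex_closedBall _ _
  have hmem : ∀ u : EuclideanSpace ℝ (Fin n), ‖u - xstar‖ ≤ δ0 →
      u ∈ closedBall xstar δ0 := fun u hu => by
    simpa [mem_closedBall, dist_eq_norm] using hu
  have hxs : xstar ∈ closedBall xstar δ0 := mem_closedBall_self hδ0pos.le
  -- lower bound on H v
  have hHv : ∀ v : EuclideanSpace ℝ (Fin n), α * ‖v‖ ≤ ‖H v‖ := by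
    intro v
    rcases eq_or_ne v 0 with rfl | hv
    · simp
    · have h1 := hpd v
      have h2 : (inner ℝ (H v) v : ℝ) ≤ ‖H v‖ * ‖v‖ := real_inner_le_norm _ _
      have hvpos : 0 < ‖v‖ := norm_pos_iff.mpr hv
      have h3 : α * ‖v‖ * ‖v‖ ≤ ‖H v‖ * ‖v‖ := by nlinarith
      exact le_of_mul_le_mul_right h3 hvpos
  -- MVT for (gradient φ - H ·) : α/2 Lipschitz on ball
  have key : ∀ u : EuclideanSpace ℝ (Fin n), u ∈ closedBall xstar δ0 →
      ‖gradient φ u - H (u - xstar)‖ ≤ α / 2 * ‖u - xstar‖ := by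
    intro u hu
    have mvt := hconv.norm_image_sub_le_of_norm_hasFDerivWithin_le
      (f := fun y => gradient φ y - H y)
      (f' := fun y => fderiv ℝ (gradient φ) y - H)
      (fun y _ => ((hdiff y).hasFDerivAt.sub H.hasFDerivAt).hasFDerivWithinAt)
      (fun y hy => by
        have h1 : ‖fderiv ℝ (gradient φ) y - H‖ ≤ LH * ‖y - xstar‖ := hLip y xstar
        have h2 : ‖y - xstar‖ ≤ δ0 := by simpa [mem_closedBall, dist_eq_norm] using hy
        calc ‖fderiv ℝ (gradient φ) y - H‖ ≤ LH * ‖y - xstar‖ := h1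
          _ ≤ LH * δ0 := by nlinarith
          _ = α / 2 := hLHδ0)
      hxs hu
    have heq : gradient φ u - H u - (gradient φ xstar - H xstar)
        = gradient φ u - H (u - xstar) := by
      rw [hgrad, map_sub]; abel
    rw [heq] at mvt
    simpa using mvt
  -- lower bound: α/2 ‖x - xstar‖ ≤ ‖gradient φ x‖
  have hxball : x ∈ closedBall xstar δ0 := hmem x hx
  have hlow : α / 2 * ‖x - xstar‖ ≤ ‖gradient φ x‖ := by
    have h1 := key x hxball
    have h2 := hHv (x - xstar)
    have h3 : ‖H (x - xstar)‖ - ‖gradient φ x‖ ≤ ‖gradient φ x - H (x - xstar)‖ := by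
      have h4 := norm_sub_norm_le (H (x - xstar)) (gradient φ x)
      rw [norm_sub_rev] at h4
      linarith
    linarith
  -- upper bound: gradient is Lg-Lipschitz on ball
  have hup : ‖gradient φ (x + d)‖ ≤ Lg * ‖x + d - xstar‖ := by
    have mvt := hconv.norm_image_sub_le_of_norm_hasFDerivWithin_le
      (f := gradient φ) (C := Lg)
      (f' := fun y => fderiv ℝ (gradient φ) y)
      (fun y _ => (hdiff y).hasFDerivAt.hasFDerivWithinAt)
      (fun y hy => by
        have h1 : ‖fderiv ℝ (gradient φ) y - H‖ ≤ LH * ‖y - xstar‖ := hLip y xstar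
        have h2 : ‖y - xstar‖ ≤ δ0 := by simpa [mem_closedBall, dist_eq_norm] using hy
        have h3 : ‖fderiv ℝ (gradient φ) y‖ ≤ ‖fderiv ℝ (gradient φ) y - H‖ + ‖H‖ := by
          have h4 := norm_add_le (fderiv ℝ (gradient φ) y - H) H
          rwa [sub_add_cancel] at h4
        have h5 : LH * ‖y - xstar‖ ≤ LH * δ0 := mul_le_mul_of_nonneg_left h2 hLH.le
        rw [hLg]; linarith)
      hxs (hmem _ hxd)
    simpa [hgrad] using mvt
  -- combine
  set g := ‖gradient φ x‖ with hg
  have hr : ‖x - xstar‖ ≤ 2 / α * g := by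
    rw [div_mul_eq_mul_div, le_div_iff₀ hα]
    nlinarith
  have hrs : ‖xstar - x‖ = ‖x - xstar‖ := norm_sub_rev _ _
  have hds : ‖xstar - (x + d)‖ = ‖x + d - xstar‖ := norm_sub_rev _ _
  rw [hrs, hds] at hdist
  have hLgnn : 0 ≤ Lg := by positivity
  have hgnn : 0 ≤ g := norm_nonneg _
  have hrnn : 0 ≤ ‖x - xstar‖ := norm_nonneg _
  have hstep : ‖gradient φ (x + d)‖ ≤
      Lg * (2 / α * (LH * ‖x - xstar‖ ^ 2 + 2 * ε * ‖x - xstar‖ + 2 * ε * g)) := by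
    exact hup.trans (mul_le_mul_of_nonneg_left hdist hLgnn)
  calc ‖gradient φ (x + d)‖
      ≤ Lg * (2 / α * (LH * ‖x - xstar‖ ^ 2 + 2 * ε * ‖x - xstar‖ + 2 * ε * g)) := hstep
    _ ≤ 8 * Lg * LH / α ^ 3 * g ^ 2 + 4 * Lg * (2 + α) / α ^ 2 * ε * g := by
        have hT : 8 * Lg * LH / α ^ 3 * g ^ 2 + 4 * Lg * (2 + α) / α ^ 2 * ε * g
            = Lg * (2 / α * (LH * (2 / α * g) ^ 2 + 2 * ε * (2 / α * g) + 2 * ε * g)) := by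
          field_simp
          ring
        rw [hT]
        apply mul_le_mul_of_nonneg_left _ hLgnn
        apply mul_le_mul_of_nonneg_left _ (by positivity : (0:ℝ) ≤ 2 / α)
        have hq : ‖x - xstar‖ * ‖x - xstar‖ ≤ (2 / α * g) * (2 / α * g) :=
          mul_le_mul hr hr hrnn (by positivity)
        have hl : 2 * ε * ‖x - xstar‖ ≤ 2 * ε * (2 / α * g) :=
          mul_le_mul_of_nonneg_left hr (by positivity)
        nlinarith [sq_nonneg (2 / α * g)]
end
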